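/- arXiv:2605.22291 — 3 statements merged into one kernel-verified Lean document; each statement's English description precedes it below -/
import Mathlib

section
/- There exist {0,1}-valued random variables A, Y, Z (a joint distribution on {0,1}^3) such that the accepted-population qualification disparity P(Y=1 | A=1, Z=1) - P(Y=1 | A=1, Z=0) equals 0, while the true qualification disparity P(Y=1 | Z=1) - P(Y=1 | Z=0) is nonzero. -/
open MeasureTheory

/-- Conditional probability `P(E | C) = μ(E ∩ C) / μ(C)` as a real number. -/
noncomputable def condProb {Ω : Type*} [MeasurableSpace Ω]
    (μ : Measure Ω) (E C : Set Ω) : ℝ :=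
  (μ (E ∩ C)).toReal / (μ C).toReal

/-- There exist `{0,1}`-valued random variables `A, Y, Z` such that the
accepted-population qualification disparity vanishes while the true
qualification disparity is nonzero. -/
theorem stmt_4 :
    ∃ (Ω : Type) (m : MeasurableSpace Ω) (μ : Measure Ω)
      (_ : IsProbabilityMeasure μ) (A Y Z : Ω → ℕ),
      Measurable A ∧ Measurable Y ∧ Measurable Z ∧
      (∀ ω, A ω = 0 ∨ A ω = 1) ∧
      (∀ ω, Y ω = 0 ∨ Y ω = 1) ∧
      (∀ ω, Z ω = 0 ∨ Z ω = 1) ∧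
      (∀ i, i = 0 ∨ i = 1 → μ ({ω | A ω = 1} ∩ {ω | Z ω = i}) ≠ 0) ∧
      condProb μ {ω | Y ω = 1} ({ω | A ω = 1} ∩ {ω | Z ω = 1})
        - condProb μ {ω | Y ω = 1} ({ω | A ω = 1} ∩ {ω | Z ω = 0}) = 0 ∧
      condProb μ {ω | Y ω = 1} {ω | Z ω = 1}
        - condProb μ {ω | Y ω = 1} {ω | Z ω = 0} ≠ 0 := by
  classical
  refine ⟨Fin 3, ⊤, (PMF.uniformOfFintype (Fin 3)).toMeasure, inferInstance,
    ![1,1,0], ![1,1,0], ![1,0,1], ?_, ?_, ?_, ?_, ?_, ?_, ?_, ?_, ?_⟩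
  · exact measurable_of_finite _
  · exact measurable_of_finite _
  · exact measurable_of_finite _
  · intro ω; fin_cases ω <;> simp
  · intro ω; fin_cases ω <;> simp
  · intro ω; fin_cases ω <;> simp
  all_goals {
    have key : ∀ s : Set (Fin 3),
        (PMF.uniformOfFintype (Fin 3)).toMeasure s
          = ∑ a : Fin 3, s.indicator (fun _ => (3:ENNReal)⁻¹) a := by
      intro s
      rw [PMF.toMeasure_apply_fintype]
      congr 1; funext a
      simp [Set.indicator, PMF.uniformOfFintype_apply]
    first
    | (intro i hi
       rcases hi with h | h <;> subst h <;>
       · rw [key]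
         simp [Fin.sum_univ_three, Set.indicator, Set.mem_setOf_eq]
         try norm_num)
    | (simp only [condProb]
       rw [key, key, key, key]
       norm_num [Fin.sum_univ_three, Set.indicator, Set.mem_setOf_eq,
         Set.mem_inter_iff, ENNReal.toReal_add, ENNReal.toReal_inv, ENNReal.toReal_ofNat,
         Matrix.cons_val_two, Matrix.tail_cons, Matrix.head_cons])
  }
end

section
/- (Observed disparity decomposition for accuracy parity.) With Ỹ = A·Y + (1−A)·Ŷ, the observed accuracy disparity Δ̃ = P(Ỹ = A | Z=1) − P(Ỹ = A | Z=0) equals the true accuracy disparity Δ = P(Y = A | Z=1) − P(Y = A | Z=0) minus the bias term (r^1 ε^1 − r^0 ε^0), where r^i = P(A=0 | Z=i) and ε^i = E[Ŷ − Y | A=0, Z=i]. -/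
open MeasureTheory

/-- Conditional expectation `E[f | C] = (∫_C f dμ) / μ(C)`. -/
noncomputable def condExp' {Ω : Type*} [MeasurableSpace Ω]
    (μ : Measure Ω) (f : Ω → ℝ) (C : Set Ω) : ℝ :=
  (∫ ω in C, f ω ∂μ) / (μ C).toReal

section Aux

variable {Ω : Type*} [MeasurableSpace Ω] (μ : Measure Ω) [IsProbabilityMeasure μ]

/-- integral of a 0/1-valued nat function over a set -/
lemma integral_binary (W : Ω → ℕ) (hW : Measurable W) (hW01 : ∀ ω, W ω = 0 ∨ W ω = 1)
    (C : Set Ω) (hC : MeasurableSet C) :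
    (∫ ω in C, (W ω : ℝ) ∂μ) = (μ (C ∩ {ω | W ω = 1})).toReal := by
  have h1 : ∀ ω, (W ω : ℝ) = Set.indicator {ω | W ω = 1} (fun _ => (1:ℝ)) ω := by
    intro ω
    rcases hW01 ω with h | h <;> simp [Set.indicator, h]
  have hmW : MeasurableSet {ω | W ω = 1} := hW (measurableSet_singleton 1)
  calc (∫ ω in C, (W ω : ℝ) ∂μ)
      = ∫ ω in C, Set.indicator {ω | W ω = 1} (fun _ => (1:ℝ)) ω ∂μ := by
        simp_rw [← h1]
    _ = ∫ _ω in C ∩ {ω | W ω = 1}, (1:ℝ) ∂μ := by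
        rw [setIntegral_indicator hmW]
    _ = (μ (C ∩ {ω | W ω = 1})).toReal := by
        simp; rfl

lemma integrable_binary (W : Ω → ℕ) (hW : Measurable W) (hW01 : ∀ ω, W ω = 0 ∨ W ω = 1)
    (C : Set Ω) :
    Integrable (fun ω => (W ω : ℝ)) (μ.restrict C) := by
  have : ∀ ω, ‖(W ω : ℝ)‖ ≤ 1 := by
    intro ω; rcases hW01 ω with h | h <;> simp [h]
  exact Integrable.mono' (integrable_const 1)
    ((measurable_from_top.comp hW).aestronglyMeasurable) (Filter.Eventually.of_forall this)

end Aux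

lemma key {Ω : Type*} [MeasurableSpace Ω]
    (μ : Measure Ω) [IsProbabilityMeasure μ]
    (A Y Yh Z : Ω → ℕ)
    (hA : Measurable A) (hY : Measurable Y) (hYh : Measurable Yh) (hZ : Measurable Z)
    (hA01 : ∀ ω, A ω = 0 ∨ A ω = 1)
    (hY01 : ∀ ω, Y ω = 0 ∨ Y ω = 1)
    (hYh01 : ∀ ω, Yh ω = 0 ∨ Yh ω = 1)
    (i : ℕ) (hZi : μ {ω | Z ω = i} ≠ 0)
    (hAZi : μ ({ω | A ω = 0} ∩ {ω | Z ω = i}) ≠ 0) :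
    condProb μ {ω | A ω * Y ω + (1 - A ω) * Yh ω = A ω} {ω | Z ω = i}
    = condProb μ {ω | Y ω = A ω} {ω | Z ω = i}
      - condProb μ {ω | A ω = 0} {ω | Z ω = i}
        * condExp' μ (fun ω => (Yh ω : ℝ) - (Y ω : ℝ))
            ({ω | A ω = 0} ∩ {ω | Z ω = i}) := by
  have mA0 : MeasurableSet {ω | A ω = 0} := hA (measurableSet_singleton 0)
  have mA1 : MeasurableSet {ω | A ω = 1} := hA (measurableSet_singleton 1)
  have mY0 : MeasurableSet {ω | Y ω = 0} := hY (measurableSet_singleton 0)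
  have mY1 : MeasurableSet {ω | Y ω = 1} := hY (measurableSet_singleton 1)
  have mYh0 : MeasurableSet {ω | Yh ω = 0} := hYh (measurableSet_singleton 0)
  have mYh1 : MeasurableSet {ω | Yh ω = 1} := hYh (measurableSet_singleton 1)
  have mZi : MeasurableSet {ω | Z ω = i} := hZ (measurableSet_singleton i)
  -- set identities
  have hSobs : {ω | A ω * Y ω + (1 - A ω) * Yh ω = A ω}
      = ({ω | A ω = 1} ∩ {ω | Y ω = 1}) ∪ ({ω | A ω = 0} ∩ {ω | Yh ω = 0}) := by
    ext ω
    rcases hA01 ω with h | h <;> rcases hY01 ω with h' | h' <;>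
      rcases hYh01 ω with h'' | h'' <;>
      simp [Set.mem_setOf_eq, h, h', h'']
  have hStrue : {ω | Y ω = A ω}
      = ({ω | A ω = 1} ∩ {ω | Y ω = 1}) ∪ ({ω | A ω = 0} ∩ {ω | Y ω = 0}) := by
    ext ω
    rcases hA01 ω with h | h <;> rcases hY01 ω with h' | h' <;>
      simp [Set.mem_setOf_eq, h, h']
  set z := (μ {ω | Z ω = i}).toReal with hzdef
  set m := (μ ({ω | A ω = 0} ∩ {ω | Z ω = i})).toReal with hmdef
  set a := (μ (({ω | A ω = 1} ∩ {ω | Y ω = 1}) ∩ {ω | Z ω = i})).toReal with hadef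
  set b0 := (μ (({ω | A ω = 0} ∩ {ω | Yh ω = 0}) ∩ {ω | Z ω = i})).toReal with hb0def
  set b1 := (μ (({ω | A ω = 0} ∩ {ω | Yh ω = 1}) ∩ {ω | Z ω = i})).toReal with hb1def
  set c0 := (μ (({ω | A ω = 0} ∩ {ω | Y ω = 0}) ∩ {ω | Z ω = i})).toReal with hc0def
  set c1 := (μ (({ω | A ω = 0} ∩ {ω | Y ω = 1}) ∩ {ω | Z ω = i})).toReal with hc1def
  -- splitting by a binary variable
  have split : ∀ (W : Ω → ℕ), Measurable W → (∀ ω, W ω = 0 ∨ W ω = 1) →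
      (μ (({ω | A ω = 0} ∩ {ω | W ω = 0}) ∩ {ω | Z ω = i})).toReal
        + (μ (({ω | A ω = 0} ∩ {ω | W ω = 1}) ∩ {ω | Z ω = i})).toReal = m := by
    intro W hW hW01
    rw [hmdef, ← ENNReal.toReal_add (measure_ne_top μ _) (measure_ne_top μ _)]
    congr 1
    rw [← measure_union]
    · congr 1
      ext ω
      rcases hW01 ω with h | h <;> simp [Set.mem_setOf_eq, h]
    · rw [Set.disjoint_left]
      rintro ω ⟨⟨-, h0⟩, -⟩ ⟨⟨-, h1⟩, -⟩
      simp only [Set.mem_setOf_eq] at h0 h1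
      omega
    · exact (mA0.inter (hW (measurableSet_singleton 1))).inter mZi
  have hb : b0 + b1 = m := split Yh hYh hYh01
  have hc : c0 + c1 = m := split Y hY hY01
  -- numerators
  have hnum : ∀ (S : Set Ω), MeasurableSet S →
      (μ ((({ω | A ω = 1} ∩ {ω | Y ω = 1}) ∪ ({ω | A ω = 0} ∩ S)) ∩ {ω | Z ω = i})).toReal
      = a + (μ (({ω | A ω = 0} ∩ S) ∩ {ω | Z ω = i})).toReal := by
    intro S mS
    rw [hadef, ← ENNReal.toReal_add (measure_ne_top μ _) (measure_ne_top μ _)]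
    congr 1
    rw [Set.union_inter_distrib_right, measure_union]
    · rw [Set.disjoint_left]
      rintro ω ⟨⟨h1, -⟩, -⟩ ⟨⟨h0, -⟩, -⟩
      simp only [Set.mem_setOf_eq] at h1 h0
      omega
    · exact (mA0.inter mS).inter mZi
  have hobs : (μ ({ω | A ω * Y ω + (1 - A ω) * Yh ω = A ω} ∩ {ω | Z ω = i})).toReal
      = a + b0 := by
    rw [hSobs]; exact hnum _ mYh0
  have htrue : (μ ({ω | Y ω = A ω} ∩ {ω | Z ω = i})).toReal = a + c0 := by
    rw [hStrue]; exact hnum _ mY0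
  -- integral
  have hC : MeasurableSet ({ω | A ω = 0} ∩ {ω | Z ω = i}) := mA0.inter mZi
  have hint : (∫ ω in ({ω | A ω = 0} ∩ {ω | Z ω = i}), ((Yh ω : ℝ) - (Y ω : ℝ)) ∂μ)
      = b1 - c1 := by
    rw [integral_sub (integrable_binary μ Yh hYh hYh01 _) (integrable_binary μ Y hY hY01 _),
      integral_binary μ Yh hYh hYh01 _ hC, integral_binary μ Y hY hY01 _ hC,
      hb1def, hc1def]
    congr 3 <;> rw [Set.inter_right_comm]
  -- nonvanishing
  have hmne : m ≠ 0 := ENNReal.toReal_ne_zero.mpr ⟨hAZi, measure_ne_top μ _⟩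
  have hzne : z ≠ 0 := ENNReal.toReal_ne_zero.mpr ⟨hZi, measure_ne_top μ _⟩
  -- conclude
  unfold condProb condExp'
  rw [hobs, htrue, hint]
  rw [show (m / z) * ((b1 - c1) / m) = (b1 - c1) / z by field_simp]
  rw [← sub_div]
  congr 1
  linarith

/-- Observed disparity decomposition for accuracy parity: with imputed label
`Ỹ = A·Y + (1-A)·Ŷ`,
`P(Ỹ=A|Z=1) - P(Ỹ=A|Z=0) = (P(Y=A|Z=1) - P(Y=A|Z=0)) - (r¹ε¹ - r⁰ε⁰)`. -/
theorem stmt_7 {Ω : Type*} [MeasurableSpace Ω]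
    (μ : Measure Ω) [IsProbabilityMeasure μ]
    (A Y Yh Z : Ω → ℕ)
    (hA : Measurable A) (hY : Measurable Y) (hYh : Measurable Yh)
    (hZ : Measurable Z)
    (hA01 : ∀ ω, A ω = 0 ∨ A ω = 1)
    (hY01 : ∀ ω, Y ω = 0 ∨ Y ω = 1)
    (hYh01 : ∀ ω, Yh ω = 0 ∨ Yh ω = 1)
    (hZpos : ∀ i, i = 0 ∨ i = 1 → μ {ω | Z ω = i} ≠ 0)
    (hAZpos : ∀ i, i = 0 ∨ i = 1 → μ ({ω | A ω = 0} ∩ {ω | Z ω = i}) ≠ 0) :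
    condProb μ {ω | A ω * Y ω + (1 - A ω) * Yh ω = A ω} {ω | Z ω = 1}
      - condProb μ {ω | A ω * Y ω + (1 - A ω) * Yh ω = A ω} {ω | Z ω = 0}
    = (condProb μ {ω | Y ω = A ω} {ω | Z ω = 1}
        - condProb μ {ω | Y ω = A ω} {ω | Z ω = 0})
      - (condProb μ {ω | A ω = 0} {ω | Z ω = 1}
          * condExp' μ (fun ω => (Yh ω : ℝ) - (Y ω : ℝ))
              ({ω | A ω = 0} ∩ {ω | Z ω = 1})
        - condProb μ {ω | A ω = 0} {ω | Z ω = 0}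
          * condExp' μ (fun ω => (Yh ω : ℝ) - (Y ω : ℝ))
              ({ω | A ω = 0} ∩ {ω | Z ω = 0})) := by
  rw [key μ A Y Yh Z hA hY hYh hZ hA01 hY01 hYh01 1 (hZpos 1 (Or.inr rfl))
        (hAZpos 1 (Or.inr rfl)),
      key μ A Y Yh Z hA hY hYh hZ hA01 hY01 hYh01 0 (hZpos 0 (Or.inl rfl))
        (hAZpos 0 (Or.inl rfl))]
  ring
end

section
/- (Sufficient conditions for equality of opportunity.) Let Δ̃ = μ^1 κ^1 − μ^0 κ^0 where μ^0, μ^1 ∈ [0,1], κ^i = 1 − b^i with b^i = r^i ε^i / φ̃^i, and let Δ = μ^1 − μ^0. Let v = max(b^0, b^1) and assume v < 1 and b^i ≥ 0. If |b^1 − b^0| ≤ (1−v)ω/2 and |Δ̃| ≤ (1−v)ω/2, then |Δ| ≤ ω. -/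
/-- Sufficient conditions for equality of opportunity: with `κⁱ = 1 - bⁱ`,
`Δ̃ = μ¹κ¹ - μ⁰κ⁰`, `Δ = μ¹ - μ⁰`, `v = max(b⁰, b¹) < 1`, nonnegative `bⁱ`,
if `|b¹ - b⁰| ≤ (1-v)ω/2` and `|Δ̃| ≤ (1-v)ω/2` then `|Δ| ≤ ω`. -/
theorem stmt_11 (μ0 μ1 b0 b1 ω : ℝ)
    (hμ0 : μ0 ∈ Set.Icc (0 : ℝ) 1) (hμ1 : μ1 ∈ Set.Icc (0 : ℝ) 1)
    (hb0 : 0 ≤ b0) (hb1 : 0 ≤ b1)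
    (hv : max b0 b1 < 1)
    (hω : 0 < ω)
    (hbias : |b1 - b0| ≤ (1 - max b0 b1) * ω / 2)
    (hobs : |μ1 * (1 - b1) - μ0 * (1 - b0)| ≤ (1 - max b0 b1) * ω / 2) :
    |μ1 - μ0| ≤ ω := by
  obtain ⟨h00, h01⟩ := hμ0
  obtain ⟨h10, h11⟩ := hμ1
  have hb1v : b1 ≤ max b0 b1 := le_max_right _ _
  have hκ1 : (0:ℝ) < 1 - b1 := by linarith
  have key : (1 - b1) * |μ1 - μ0| ≤ (1 - max b0 b1) * ω := by
    have h1 : (1 - b1) * (μ1 - μ0) =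
        (μ1 * (1 - b1) - μ0 * (1 - b0)) + μ0 * (b1 - b0) := by ring
    have h2 : |(1 - b1) * (μ1 - μ0)| ≤
        |μ1 * (1 - b1) - μ0 * (1 - b0)| + |μ0 * (b1 - b0)| := by
      rw [h1]; exact abs_add_le _ _
    have h3 : |μ0 * (b1 - b0)| ≤ |b1 - b0| := by
      rw [abs_mul]
      calc |μ0| * |b1 - b0| ≤ 1 * |b1 - b0| := by
            apply mul_le_mul_of_nonneg_right _ (abs_nonneg _)
            rw [abs_le]; constructor <;> linarith
        _ = |b1 - b0| := one_mul _
    rw [abs_mul, abs_of_pos hκ1] at h2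
    linarith
  have h4 : (1 - max b0 b1) * ω ≤ (1 - b1) * ω := by nlinarith
  have := key.trans h4
  exact le_of_mul_le_mul_left this hκ1
end
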